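/- arXiv:2204.13144 — 2 statements merged into one kernel-verified Lean document; each statement's English description precedes it below -/
import Mathlib

section
/- Suppose q satisfies the latent-level treatment bridge equation E[q(Z,A,X) | σ(A,U,X)] = 1/P(A|σ(U,X)) a.s., proxy independence holds, T is conditionally independent of C given σ(A,X,Z,W), and G_t is a version of P(C > t | σ(A,X,Z,W)) with G_t > 0 a.s. Then for every a ∈ {0,1}, every t ∈ ℝ, and every bounded measurable function h̃ of (W,A,X), P(T(a) > t) = E[ 1{A=a}·q(Z,A,X)·(1{T>t}·1{C>t}/G_t − h̃(W,A,X)) + h̃(W,a,X) ]. (Censored-data proximal doubly robust identification when the treatment bridge is correct.) -/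
open MeasureTheory ProbabilityTheory
open scoped ENNReal NNReal

set_option linter.unusedSectionVars false
set_option maxHeartbeats 1000000
set_option maxHeartbeats 1000000

section Helpers
variable {Ω : Type*} {mΩ : MeasurableSpace Ω} {P : Measure Ω} [IsProbabilityMeasure P]

lemma aux_integrable_of_ae_bdd {f : Ω → ℝ} (hf : AEStronglyMeasurable f P) {C : ℝ}
    (hb : ∀ᵐ ω ∂P, |f ω| ≤ C) : Integrable f P :=
  (integrable_const C).mono' hf (by filter_upwards [hb] with ω h; simpa [Real.norm_eq_abs] using h)

lemma aux_condexp_abs_le {m : MeasurableSpace Ω} {f : Ω → ℝ} {C : ℝ}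
    (hb : ∀ᵐ ω ∂P, |f ω| ≤ C) : ∀ᵐ ω ∂P, |(P[f|m]) ω| ≤ C := by
  have hC0 : 0 ≤ C := by
    have hne : (MeasureTheory.ae P).NeBot := ae_neBot.2 (IsProbabilityMeasure.ne_zero P)
    obtain ⟨ω, hω⟩ := hb.exists
    exact le_trans (abs_nonneg _) hω
  have := ae_bdd_condExp_of_ae_bdd (m := m) (μ := P) (R := ⟨C, hC0⟩) (f := f)
    (by exact hb)
  exact this

lemma aux_integral_mul_condexp {m : MeasurableSpace Ω} (hm : m ≤ mΩ) {ξ Y : Ω → ℝ}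
    (hξ : StronglyMeasurable[m] ξ) {C : ℝ} (hξb : ∀ᵐ ω ∂P, |ξ ω| ≤ C)
    (hY : Integrable Y P) :
    ∫ ω, ξ ω * Y ω ∂P = ∫ ω, ξ ω * (P[Y|m]) ω ∂P := by
  have hξae : AEStronglyMeasurable[mΩ] ξ P := (hξ.mono hm).aestronglyMeasurable
  have hint : Integrable (ξ * Y) P := hY.bdd_mul hξae
    (by filter_upwards [hξb] with ω h; simpa [Real.norm_eq_abs] using h)
  calc ∫ ω, ξ ω * Y ω ∂P = ∫ ω, (P[ξ * Y|m]) ω ∂P := (integral_condExp hm).symm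
    _ = ∫ ω, (ξ * P[Y|m]) ω ∂P := integral_congr_ae (condExp_mul_of_stronglyMeasurable_left hξ hint hY)
    _ = _ := rfl

lemma aux_ext_prod_meas {α β : Type*} [MeasurableSpace α] [MeasurableSpace β]
    {μ ν : Measure (α × β)} [IsFiniteMeasure μ] [IsFiniteMeasure ν]
    (h : ∀ s t, MeasurableSet s → MeasurableSet t → μ (s ×ˢ t) = ν (s ×ˢ t)) : μ = ν := by
  refine ext_of_generate_finite _ generateFrom_prod.symm isPiSystem_prod ?_ ?_
  · rintro _ ⟨s, hs, t, ht, rfl⟩; exact h s t hs ht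
  · simpa [← Set.univ_prod_univ] using h _ _ MeasurableSet.univ MeasurableSet.univ

lemma aux_integral_wmap {γ : Type*} [MeasurableSpace γ] {ρ : Ω → ℝ} (hρ : Measurable ρ)
    (hρ0 : ∀ ω, 0 ≤ ρ ω)
    {V : Ω → γ} (hV : Measurable V) {g : γ → ℝ} (hg : Measurable g) :
    ∫ y, g y ∂((P.withDensity fun ω => ENNReal.ofReal (ρ ω)).map V)
      = ∫ ω, g (V ω) * ρ ω ∂P := by
  rw [integral_map hV.aemeasurable hg.aestronglyMeasurable]
  have h1 : (fun ω => ENNReal.ofReal (ρ ω))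
      = fun ω => (((fun ω => (ρ ω).toNNReal) ω : ℝ≥0) : ℝ≥0∞) := rfl
  rw [h1, integral_withDensity_eq_integral_smul hρ.real_toNNReal]
  refine integral_congr_ae (Filter.Eventually.of_forall fun ω => ?_)
  simp [NNReal.smul_def, Real.coe_toNNReal _ (hρ0 ω), mul_comm]

lemma aux_isFiniteMeasure_wmap {γ : Type*} [MeasurableSpace γ] {ρ : Ω → ℝ} {Cρ : ℝ}
    (hρb : ∀ᵐ ω ∂P, |ρ ω| ≤ Cρ) (V : Ω → γ) :
    IsFiniteMeasure ((P.withDensity fun ω => ENNReal.ofReal (ρ ω)).map V) := by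
  have h1 : IsFiniteMeasure (P.withDensity fun ω => ENNReal.ofReal (ρ ω)) :=
    isFiniteMeasure_withDensity_ofReal (HasFiniteIntegral.of_bounded (C := Cρ)
      (by filter_upwards [hρb] with ω h; simpa [Real.norm_eq_abs] using h))
  infer_instance

lemma aux_wmap_apply_toReal {γ : Type*} [MeasurableSpace γ] {ρ : Ω → ℝ} (hρ : Measurable ρ)
    (hρ0 : ∀ ω, 0 ≤ ρ ω)
    {V : Ω → γ} (hV : Measurable V) {s : Set γ} (hs : MeasurableSet s) :
    (((P.withDensity fun ω => ENNReal.ofReal (ρ ω)).map V) s).toReal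
      = ∫ ω, s.indicator (fun _ => (1:ℝ)) (V ω) * ρ ω ∂P := by
  rw [← aux_integral_wmap hρ hρ0 hV (g := s.indicator fun _ => (1:ℝ))
    (measurable_const.indicator hs)]
  exact (integral_indicator_one hs).symm

lemma aux_ind_abs_le {τ : Type*} (s : Set τ) (x : τ) :
    |s.indicator (fun _ => (1:ℝ)) x| ≤ 1 := by
  by_cases h : x ∈ s <;> simp [h]

lemma aux_ind_nonneg {τ : Type*} (s : Set τ) (x : τ) :
    0 ≤ s.indicator (fun _ => (1:ℝ)) x := by
  by_cases h : x ∈ s <;> simp [h]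

/-- If two nonnegative bounded densities give equal integrals against all rectangle
indicators composed with `V`, they give equal integrals against all bounded measurable `g`. -/
lemma aux_wmap_integral_eq {α β : Type*} [MeasurableSpace α] [MeasurableSpace β]
    {ρ₁ ρ₂ : Ω → ℝ} (hρ₁ : Measurable ρ₁) (hρ₂ : Measurable ρ₂)
    (h01 : ∀ ω, 0 ≤ ρ₁ ω) (h02 : ∀ ω, 0 ≤ ρ₂ ω)
    {C₁ C₂ : ℝ} (hb₁ : ∀ᵐ ω ∂P, |ρ₁ ω| ≤ C₁) (hb₂ : ∀ᵐ ω ∂P, |ρ₂ ω| ≤ C₂)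
    {V : Ω → α × β} (hV : Measurable V)
    (hrect : ∀ s t, MeasurableSet s → MeasurableSet t →
      ∫ ω, s.indicator (fun _ => (1:ℝ)) ((V ω).1)
          * t.indicator (fun _ => (1:ℝ)) ((V ω).2) * ρ₁ ω ∂P
      = ∫ ω, s.indicator (fun _ => (1:ℝ)) ((V ω).1)
          * t.indicator (fun _ => (1:ℝ)) ((V ω).2) * ρ₂ ω ∂P)
    {g : α × β → ℝ} (hg : Measurable g) :
    ∫ ω, g (V ω) * ρ₁ ω ∂P = ∫ ω, g (V ω) * ρ₂ ω ∂P := by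
  haveI i1 := aux_isFiniteMeasure_wmap (P := P) hb₁ V
  haveI i2 := aux_isFiniteMeasure_wmap (P := P) hb₂ V
  have hip : ∀ (s : Set α) (t : Set β) (x : α × β),
      (s ×ˢ t).indicator (fun _ => (1:ℝ)) x
        = s.indicator (fun _ => (1:ℝ)) x.1 * t.indicator (fun _ => (1:ℝ)) x.2 := by
    intro s t x
    by_cases h1 : x.1 ∈ s <;> by_cases h2 : x.2 ∈ t <;>
      simp [Set.indicator_apply, h1, h2, Set.mem_prod]
  have hmeq : (P.withDensity fun ω => ENNReal.ofReal (ρ₁ ω)).map V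
      = (P.withDensity fun ω => ENNReal.ofReal (ρ₂ ω)).map V := by
    refine aux_ext_prod_meas fun s t hs ht => ?_
    refine (ENNReal.toReal_eq_toReal_iff' (measure_ne_top _ _) (measure_ne_top _ _)).1 ?_
    rw [aux_wmap_apply_toReal hρ₁ h01 hV (hs.prod ht),
      aux_wmap_apply_toReal hρ₂ h02 hV (hs.prod ht)]
    calc ∫ ω, (s ×ˢ t).indicator (fun _ => (1:ℝ)) (V ω) * ρ₁ ω ∂P
        = ∫ ω, s.indicator (fun _ => (1:ℝ)) ((V ω).1)
            * t.indicator (fun _ => (1:ℝ)) ((V ω).2) * ρ₁ ω ∂P := by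
          refine integral_congr_ae (Filter.Eventually.of_forall fun ω => ?_); simp only [hip]
      _ = ∫ ω, s.indicator (fun _ => (1:ℝ)) ((V ω).1)
            * t.indicator (fun _ => (1:ℝ)) ((V ω).2) * ρ₂ ω ∂P := hrect s t hs ht
      _ = ∫ ω, (s ×ˢ t).indicator (fun _ => (1:ℝ)) (V ω) * ρ₂ ω ∂P := by
          refine integral_congr_ae (Filter.Eventually.of_forall fun ω => ?_); simp only [hip]
  rw [← aux_integral_wmap hρ₁ h01 hV hg, hmeq, aux_integral_wmap hρ₂ h02 hV hg]


lemma aux_integral_ite_lt {f : Ω → ℝ} (hf : Measurable f) (t : ℝ) :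
    ∫ ω, (if t < f ω then (1:ℝ) else 0) ∂P = (P {ω | t < f ω}).toReal := by
  have hms : MeasurableSet {ω | t < f ω} := measurableSet_lt measurable_const hf
  rw [← measureReal_def, ← integral_indicator_one hms]
  refine integral_congr_ae (Filter.Eventually.of_forall fun ω => ?_)
  by_cases h : t < f ω <;> simp [Set.indicator_apply, h]

variable {γ₁ γ₂ δ : Type*} [MeasurableSpace γ₁] [MeasurableSpace γ₂] [MeasurableSpace δ]
variable {m₀ : MeasurableSpace Ω}
variable {F : Ω → γ₁} {Gv : Ω → γ₂} {Xv : Ω → δ}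

lemma aux_step2 (hm₀ : m₀ ≤ mΩ)
    (hF : Measurable[mΩ] F) (hGv : Measurable[mΩ] Gv) (hXv : Measurable[mΩ] Xv)
    (hXm₀ : Measurable[m₀] Xv)
    (hIndep : ∀ (f : γ₁ → ℝ) (g : γ₂ → ℝ), Measurable f → Measurable g →
      (∃ C, ∀ x, |f x| ≤ C) → (∃ C, ∀ x, |g x| ≤ C) →
      (P[fun ω => f (F ω) * g (Gv ω)|m₀]) =ᵐ[P]
        fun ω => (P[fun ω' => f (F ω')|m₀]) ω * (P[fun ω' => g (Gv ω')|m₀]) ω)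
    (f : γ₁ × δ → ℝ) (hf : Measurable f) {Cf : ℝ} (hCf : ∀ x, |f x| ≤ Cf)
    (γf : γ₂ → ℝ) (hγm : Measurable γf) {Cγ : ℝ} (hCγ : ∀ x, |γf x| ≤ Cγ)
    (hγ0 : ∀ x, 0 ≤ γf x) :
    ∫ ω, f (F ω, Xv ω) * γf (Gv ω) ∂P
      = ∫ ω, (P[fun ω' => f (F ω', Xv ω')|m₀]) ω * γf (Gv ω) ∂P := by
  have hV₁ : Measurable[mΩ] (fun ω => (F ω, Xv ω)) := hF.prodMk hXv
  have hγGv : Measurable[mΩ] (fun ω => γf (Gv ω)) := hγm.comp hGv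
  set η : Ω → ℝ := P[fun ω => γf (Gv ω)|m₀] with hηdef
  have hηsm : StronglyMeasurable[m₀] η := stronglyMeasurable_condExp
  have hηm : Measurable[mΩ] η := (hηsm.mono hm₀).measurable
  have hη0 : ∀ᵐ ω ∂P, 0 ≤ η ω := condExp_nonneg (Filter.Eventually.of_forall fun ω => hγ0 _)
  have hηb : ∀ᵐ ω ∂P, |η ω| ≤ Cγ :=
    aux_condexp_abs_le (Filter.Eventually.of_forall fun ω => hCγ _)
  set ξf : Ω → ℝ := P[fun ω' => f (F ω', Xv ω')|m₀] with hξdef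
  have hξsm : StronglyMeasurable[m₀] ξf := stronglyMeasurable_condExp
  have hξb : ∀ᵐ ω ∂P, |ξf ω| ≤ Cf :=
    aux_condexp_abs_le (Filter.Eventually.of_forall fun ω => hCf _)
  have hfV₁ : Integrable (fun ω => f (F ω, Xv ω)) P :=
    aux_integrable_of_ae_bdd (P:=P) ((hf.comp hV₁).aestronglyMeasurable :)
      (Filter.Eventually.of_forall fun ω => hCf _)
  -- rectangles
  have hrect : ∀ (s : Set γ₁) (t : Set δ), MeasurableSet s → MeasurableSet t →
      ∫ ω, s.indicator (fun _ => (1:ℝ)) (F ω) * t.indicator (fun _ => (1:ℝ)) (Xv ω)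
          * γf (Gv ω) ∂P
      = ∫ ω, s.indicator (fun _ => (1:ℝ)) (F ω) * t.indicator (fun _ => (1:ℝ)) (Xv ω)
          * max (η ω) 0 ∂P := by
    intro s t hs ht
    have hζsm : StronglyMeasurable[m₀] (fun ω => t.indicator (fun _ => (1:ℝ)) (Xv ω)) :=
      ((measurable_const.indicator ht).comp hXm₀).stronglyMeasurable
    have hsF : Measurable[mΩ] (fun ω => s.indicator (fun _ => (1:ℝ)) (F ω)) :=
      (measurable_const.indicator hs).comp hF
    have hY : Integrable (fun ω => s.indicator (fun _ => (1:ℝ)) (F ω) * γf (Gv ω)) P :=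
      aux_integrable_of_ae_bdd (P:=P) ((hsF.mul hγGv).aestronglyMeasurable :) (C := 1 * Cγ)
        (Filter.Eventually.of_forall fun ω => by
          rw [abs_mul]
          exact mul_le_mul (aux_ind_abs_le _ _) (hCγ _) (abs_nonneg _) zero_le_one)
    have hYs : Integrable (fun ω => s.indicator (fun _ => (1:ℝ)) (F ω)) P :=
      aux_integrable_of_ae_bdd (P:=P) (hsF.aestronglyMeasurable :)
        (Filter.Eventually.of_forall fun ω => aux_ind_abs_le _ _)
    calc ∫ ω, s.indicator (fun _ => (1:ℝ)) (F ω) * t.indicator (fun _ => (1:ℝ)) (Xv ω)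
            * γf (Gv ω) ∂P
        = ∫ ω, t.indicator (fun _ => (1:ℝ)) (Xv ω)
            * (s.indicator (fun _ => (1:ℝ)) (F ω) * γf (Gv ω)) ∂P :=
          integral_congr_ae (Filter.Eventually.of_forall fun ω => by ring)
      _ = ∫ ω, t.indicator (fun _ => (1:ℝ)) (Xv ω)
            * (P[fun ω => s.indicator (fun _ => (1:ℝ)) (F ω) * γf (Gv ω)|m₀]) ω ∂P :=
          aux_integral_mul_condexp hm₀ hζsm (C := 1)
            (Filter.Eventually.of_forall fun ω => aux_ind_abs_le _ _) hY
      _ = ∫ ω, t.indicator (fun _ => (1:ℝ)) (Xv ω)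
            * ((P[fun ω' => s.indicator (fun _ => (1:ℝ)) (F ω')|m₀]) ω * η ω) ∂P := by
          refine integral_congr_ae ?_
          filter_upwards [hIndep (s.indicator fun _ => (1:ℝ)) γf (measurable_const.indicator hs)
            hγm ⟨1, fun x => aux_ind_abs_le _ _⟩ ⟨Cγ, fun x => hCγ _⟩] with ω hω
          rw [hω]
      _ = ∫ ω, t.indicator (fun _ => (1:ℝ)) (Xv ω) * η ω
            * (P[fun ω' => s.indicator (fun _ => (1:ℝ)) (F ω')|m₀]) ω ∂P :=
          integral_congr_ae (Filter.Eventually.of_forall fun ω => by ring)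
      _ = ∫ ω, t.indicator (fun _ => (1:ℝ)) (Xv ω) * η ω
            * s.indicator (fun _ => (1:ℝ)) (F ω) ∂P :=
          (aux_integral_mul_condexp hm₀ (hζsm.mul hηsm) (C := 1 * Cγ) (by
            filter_upwards [hηb] with ω hω
            simp only [Pi.mul_apply]
            rw [abs_mul]
            exact mul_le_mul (aux_ind_abs_le _ _) hω (abs_nonneg _) zero_le_one) hYs).symm
      _ = ∫ ω, s.indicator (fun _ => (1:ℝ)) (F ω) * t.indicator (fun _ => (1:ℝ)) (Xv ω)
            * max (η ω) 0 ∂P := by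
          refine integral_congr_ae ?_
          filter_upwards [hη0] with ω hω
          rw [max_eq_left hω]
          ring
  have hae : (MeasureTheory.ae P).NeBot := ae_neBot.2 (IsProbabilityMeasure.ne_zero P)
  have hCγ0 : 0 ≤ Cγ := le_trans (abs_nonneg _) hηb.exists.choose_spec
  have hγint : Integrable (fun ω => γf (Gv ω)) P :=
    aux_integrable_of_ae_bdd (P:=P) (hγGv.aestronglyMeasurable :)
      (Filter.Eventually.of_forall fun ω => hCγ _)
  have hkey : ∫ ω, f (F ω, Xv ω) * γf (Gv ω) ∂P = ∫ ω, f (F ω, Xv ω) * max (η ω) 0 ∂P :=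
    aux_wmap_integral_eq hγGv (hηm.max measurable_const)
      (fun ω => hγ0 _) (fun ω => le_max_right _ _)
      (hb₁ := Filter.Eventually.of_forall fun ω => hCγ _)
      (hb₂ := by
        filter_upwards [hηb] with ω hω
        rw [abs_of_nonneg (le_max_right (η ω) 0)]
        exact max_le (abs_le.1 hω).2 hCγ0)
      hV₁ hrect hf
  calc ∫ ω, f (F ω, Xv ω) * γf (Gv ω) ∂P
      = ∫ ω, f (F ω, Xv ω) * max (η ω) 0 ∂P := hkey
    _ = ∫ ω, η ω * f (F ω, Xv ω) ∂P := by
        refine integral_congr_ae ?_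
        filter_upwards [hη0] with ω hω
        rw [max_eq_left hω]; ring
    _ = ∫ ω, η ω * ξf ω ∂P := aux_integral_mul_condexp hm₀ hηsm hηb hfV₁
    _ = ∫ ω, ξf ω * η ω ∂P :=
        integral_congr_ae (Filter.Eventually.of_forall fun ω => mul_comm _ _)
    _ = ∫ ω, ξf ω * γf (Gv ω) ∂P := (aux_integral_mul_condexp hm₀ hξsm hξb hγint).symm

lemma aux_step2s (hm₀ : m₀ ≤ mΩ)
    (hF : Measurable[mΩ] F) (hGv : Measurable[mΩ] Gv) (hXv : Measurable[mΩ] Xv)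
    (hXm₀ : Measurable[m₀] Xv)
    (hIndep : ∀ (f : γ₁ → ℝ) (g : γ₂ → ℝ), Measurable f → Measurable g →
      (∃ C, ∀ x, |f x| ≤ C) → (∃ C, ∀ x, |g x| ≤ C) →
      (P[fun ω => f (F ω) * g (Gv ω)|m₀]) =ᵐ[P]
        fun ω => (P[fun ω' => f (F ω')|m₀]) ω * (P[fun ω' => g (Gv ω')|m₀]) ω)
    (f : γ₁ × δ → ℝ) (hf : Measurable f) {Cf : ℝ} (hCf : ∀ x, |f x| ≤ Cf)
    (γf : γ₂ → ℝ) (hγm : Measurable γf) {Cγ : ℝ} (hCγ : ∀ x, |γf x| ≤ Cγ) :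
    ∫ ω, f (F ω, Xv ω) * γf (Gv ω) ∂P
      = ∫ ω, (P[fun ω' => f (F ω', Xv ω')|m₀]) ω * γf (Gv ω) ∂P := by
  have hV₁ : Measurable[mΩ] (fun ω => (F ω, Xv ω)) := hF.prodMk hXv
  set γp : γ₂ → ℝ := fun x => max (γf x) 0 with hγpdef
  set γn : γ₂ → ℝ := fun x => max (-γf x) 0 with hγndef
  have hγpm : Measurable γp := hγm.max measurable_const
  have hγnm : Measurable γn := hγm.neg.max measurable_const
  have hγpb : ∀ x, |γp x| ≤ Cγ := fun x => by
    rw [abs_of_nonneg (le_max_right _ _)]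
    exact max_le (abs_le.1 (hCγ x)).2 (le_trans (abs_nonneg _) (hCγ x))
  have hγnb : ∀ x, |γn x| ≤ Cγ := fun x => by
    rw [abs_of_nonneg (le_max_right _ _)]
    exact max_le (le_trans (neg_le_abs _) (hCγ x)) (le_trans (abs_nonneg _) (hCγ x))
  have hsub : ∀ x, γf x = γp x - γn x := fun x => (max_zero_sub_max_neg_zero_eq_self _).symm
  set ξf : Ω → ℝ := P[fun ω' => f (F ω', Xv ω')|m₀] with hξdef
  have hξsm : StronglyMeasurable[m₀] ξf := stronglyMeasurable_condExp
  have hξb : ∀ᵐ ω ∂P, |ξf ω| ≤ Cf :=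
    aux_condexp_abs_le (Filter.Eventually.of_forall fun ω => hCf _)
  have hξaesm : AEStronglyMeasurable[mΩ] ξf P := ((hξsm.mono hm₀).measurable).aestronglyMeasurable
  have hip : Integrable (fun ω => f (F ω, Xv ω) * γp (Gv ω)) P :=
    aux_integrable_of_ae_bdd (P:=P) (((hf.comp hV₁).mul (hγpm.comp hGv)).aestronglyMeasurable :)
      (C := Cf * Cγ) (Filter.Eventually.of_forall fun ω => by
        rw [abs_mul]
        exact mul_le_mul (hCf _) (hγpb _) (abs_nonneg _) (le_trans (abs_nonneg (f (F ω, Xv ω))) (hCf (F ω, Xv ω))))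
  have hin : Integrable (fun ω => f (F ω, Xv ω) * γn (Gv ω)) P :=
    aux_integrable_of_ae_bdd (P:=P) (((hf.comp hV₁).mul (hγnm.comp hGv)).aestronglyMeasurable :)
      (C := Cf * Cγ) (Filter.Eventually.of_forall fun ω => by
        rw [abs_mul]
        exact mul_le_mul (hCf _) (hγnb _) (abs_nonneg _) (le_trans (abs_nonneg (f (F ω, Xv ω))) (hCf (F ω, Xv ω))))
  have hip' : Integrable (fun ω => ξf ω * γp (Gv ω)) P :=
    aux_integrable_of_ae_bdd (P:=P) (hξaesm.mul ((hγpm.comp hGv).aestronglyMeasurable :))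
      (C := Cf * Cγ) (by
        filter_upwards [hξb] with ω hω
        rw [abs_mul]
        exact mul_le_mul hω (hγpb _) (abs_nonneg _) (le_trans (abs_nonneg _) hω))
  have hin' : Integrable (fun ω => ξf ω * γn (Gv ω)) P :=
    aux_integrable_of_ae_bdd (P:=P) (hξaesm.mul ((hγnm.comp hGv).aestronglyMeasurable :))
      (C := Cf * Cγ) (by
        filter_upwards [hξb] with ω hω
        rw [abs_mul]
        exact mul_le_mul hω (hγnb _) (abs_nonneg _) (le_trans (abs_nonneg _) hω))
  calc ∫ ω, f (F ω, Xv ω) * γf (Gv ω) ∂P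
      = ∫ ω, f (F ω, Xv ω) * γp (Gv ω) - f (F ω, Xv ω) * γn (Gv ω) ∂P :=
        integral_congr_ae (Filter.Eventually.of_forall fun ω => by simp only [hsub]; ring)
    _ = (∫ ω, f (F ω, Xv ω) * γp (Gv ω) ∂P) - ∫ ω, f (F ω, Xv ω) * γn (Gv ω) ∂P :=
        integral_sub hip hin
    _ = (∫ ω, ξf ω * γp (Gv ω) ∂P) - ∫ ω, ξf ω * γn (Gv ω) ∂P := by
        rw [aux_step2 (P:=P) hm₀ hF hGv hXv hXm₀ hIndep f hf hCf γp hγpm hγpb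
            (fun x => le_max_right _ _),
          aux_step2 (P:=P) hm₀ hF hGv hXv hXm₀ hIndep f hf hCf γn hγnm hγnb
            (fun x => le_max_right _ _)]
    _ = ∫ ω, ξf ω * γp (Gv ω) - ξf ω * γn (Gv ω) ∂P := (integral_sub hip' hin').symm
    _ = ∫ ω, ξf ω * γf (Gv ω) ∂P :=
        integral_congr_ae (Filter.Eventually.of_forall fun ω => by simp only [hsub]; ring)

lemma aux_decouple (hm₀ : m₀ ≤ mΩ)
    (hF : Measurable[mΩ] F) (hGv : Measurable[mΩ] Gv) (hXv : Measurable[mΩ] Xv)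
    (hXm₀ : Measurable[m₀] Xv)
    (hIndep : ∀ (f : γ₁ → ℝ) (g : γ₂ → ℝ), Measurable f → Measurable g →
      (∃ C, ∀ x, |f x| ≤ C) → (∃ C, ∀ x, |g x| ≤ C) →
      (P[fun ω => f (F ω) * g (Gv ω)|m₀]) =ᵐ[P]
        fun ω => (P[fun ω' => f (F ω')|m₀]) ω * (P[fun ω' => g (Gv ω')|m₀]) ω)
    (f : γ₁ × δ → ℝ) (hf : Measurable f) {Cf : ℝ} (hCf : ∀ x, |f x| ≤ Cf)
    (g : γ₂ × δ → ℝ) (hg : Measurable g) {Cg : ℝ} (hCg : ∀ x, |g x| ≤ Cg) :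
    ∫ ω, f (F ω, Xv ω) * g (Gv ω, Xv ω) ∂P
      = ∫ ω, (P[fun ω' => f (F ω', Xv ω')|m₀]) ω * g (Gv ω, Xv ω) ∂P := by
  have hV₁ : Measurable[mΩ] (fun ω => (F ω, Xv ω)) := hF.prodMk hXv
  have hV₂ : Measurable[mΩ] (fun ω => (Gv ω, Xv ω)) := hGv.prodMk hXv
  have hae : (MeasureTheory.ae P).NeBot := ae_neBot.2 (IsProbabilityMeasure.ne_zero P)
  have hCf0 : 0 ≤ Cf := by
    have h : ∀ᵐ ω ∂P, |f (F ω, Xv ω)| ≤ Cf := Filter.Eventually.of_forall fun ω => hCf _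
    exact le_trans (abs_nonneg _) h.exists.choose_spec
  have hCg0 : 0 ≤ Cg := by
    have h : ∀ᵐ ω ∂P, |g (Gv ω, Xv ω)| ≤ Cg := Filter.Eventually.of_forall fun ω => hCg _
    exact le_trans (abs_nonneg _) h.exists.choose_spec
  have hgV₂ : Measurable[mΩ] (fun ω => g (Gv ω, Xv ω)) := hg.comp hV₂
  -- main claim for nonnegative f
  have main0 : ∀ (f0 : γ₁ × δ → ℝ), Measurable f0 → ∀ (Cf' : ℝ), (∀ x, |f0 x| ≤ Cf') →
      (∀ x, 0 ≤ f0 x) →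
      ∫ ω, f0 (F ω, Xv ω) * g (Gv ω, Xv ω) ∂P
        = ∫ ω, (P[fun ω' => f0 (F ω', Xv ω')|m₀]) ω * g (Gv ω, Xv ω) ∂P := by
    intro f0 hf0 Cf' hCf' hf00
    have hCf'0 : 0 ≤ Cf' := by
      have h : ∀ᵐ ω ∂P, |f0 (F ω, Xv ω)| ≤ Cf' := Filter.Eventually.of_forall fun ω => hCf' _
      exact le_trans (abs_nonneg _) h.exists.choose_spec
    set ξ0 : Ω → ℝ := P[fun ω' => f0 (F ω', Xv ω')|m₀] with hξ0def
    have hξ0sm : StronglyMeasurable[m₀] ξ0 := stronglyMeasurable_condExp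
    have hξ0m : Measurable[mΩ] ξ0 := (hξ0sm.mono hm₀).measurable
    have hξ0b : ∀ᵐ ω ∂P, |ξ0 ω| ≤ Cf' :=
      aux_condexp_abs_le (Filter.Eventually.of_forall fun ω => hCf' _)
    have hξ00 : ∀ᵐ ω ∂P, 0 ≤ ξ0 ω :=
      condExp_nonneg (Filter.Eventually.of_forall fun ω => hf00 _)
    have hf0int : Integrable (fun ω => f0 (F ω, Xv ω)) P :=
      aux_integrable_of_ae_bdd (P:=P) ((hf0.comp hV₁).aestronglyMeasurable :)
        (Filter.Eventually.of_forall fun ω => hCf' _)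
    have hrect : ∀ (s : Set γ₂) (t : Set δ), MeasurableSet s → MeasurableSet t →
        ∫ ω, s.indicator (fun _ => (1:ℝ)) (Gv ω) * t.indicator (fun _ => (1:ℝ)) (Xv ω)
            * f0 (F ω, Xv ω) ∂P
        = ∫ ω, s.indicator (fun _ => (1:ℝ)) (Gv ω) * t.indicator (fun _ => (1:ℝ)) (Xv ω)
            * max (ξ0 ω) 0 ∂P := by
      intro s t hs ht
      set f' : γ₁ × δ → ℝ := fun p => t.indicator (fun _ => (1:ℝ)) p.2 * f0 p with hf'def
      have hf'm : Measurable f' :=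
        ((measurable_const.indicator ht).comp measurable_snd).mul hf0
      have hf'b : ∀ x, |f' x| ≤ 1 * Cf' := fun x => by
        rw [hf'def]
        simp only []
        rw [abs_mul]
        exact mul_le_mul (aux_ind_abs_le _ _) (hCf' _) (abs_nonneg _) zero_le_one
      have hζsm : StronglyMeasurable[m₀] (fun ω => t.indicator (fun _ => (1:ℝ)) (Xv ω)) :=
        ((measurable_const.indicator ht).comp hXm₀).stronglyMeasurable
      have hζint : Integrable (fun ω => t.indicator (fun _ => (1:ℝ)) (Xv ω)
          * f0 (F ω, Xv ω)) P :=
        aux_integrable_of_ae_bdd (P:=P)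
          ((((measurable_const.indicator ht).comp hXv).mul (hf0.comp hV₁)).aestronglyMeasurable :)
          (C := 1 * Cf') (Filter.Eventually.of_forall fun ω => by
            rw [abs_mul]
            exact mul_le_mul (aux_ind_abs_le _ _) (hCf' _) (abs_nonneg _) zero_le_one)
      have hcond : (P[fun ω' => f' (F ω', Xv ω')|m₀])
          =ᵐ[P] fun ω => t.indicator (fun _ => (1:ℝ)) (Xv ω) * ξ0 ω := by
        have h1 : (P[(fun ω => t.indicator (fun _ => (1:ℝ)) (Xv ω))
              * (fun ω => f0 (F ω, Xv ω))|m₀])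
            =ᵐ[P] (fun ω => t.indicator (fun _ => (1:ℝ)) (Xv ω)) * ξ0 :=
          condExp_mul_of_stronglyMeasurable_left hζsm hζint hf0int
        exact h1
      calc ∫ ω, s.indicator (fun _ => (1:ℝ)) (Gv ω) * t.indicator (fun _ => (1:ℝ)) (Xv ω)
              * f0 (F ω, Xv ω) ∂P
          = ∫ ω, f' (F ω, Xv ω) * s.indicator (fun _ => (1:ℝ)) (Gv ω) ∂P :=
            integral_congr_ae (Filter.Eventually.of_forall fun ω => by
              rw [hf'def]; simp only []; ring)
        _ = ∫ ω, (P[fun ω' => f' (F ω', Xv ω')|m₀]) ω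
              * s.indicator (fun _ => (1:ℝ)) (Gv ω) ∂P :=
            aux_step2s hm₀ hF hGv hXv hXm₀ hIndep f' hf'm hf'b
              (s.indicator fun _ => (1:ℝ)) (measurable_const.indicator hs)
              (fun x => aux_ind_abs_le _ _)
        _ = ∫ ω, t.indicator (fun _ => (1:ℝ)) (Xv ω) * ξ0 ω
              * s.indicator (fun _ => (1:ℝ)) (Gv ω) ∂P := by
            refine integral_congr_ae ?_
            filter_upwards [hcond] with ω hω
            rw [hω]
        _ = ∫ ω, s.indicator (fun _ => (1:ℝ)) (Gv ω) * t.indicator (fun _ => (1:ℝ)) (Xv ω)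
              * max (ξ0 ω) 0 ∂P := by
            refine integral_congr_ae ?_
            filter_upwards [hξ00] with ω hω
            rw [max_eq_left hω]
            ring
    have hkey : ∫ ω, g (Gv ω, Xv ω) * f0 (F ω, Xv ω) ∂P
        = ∫ ω, g (Gv ω, Xv ω) * max (ξ0 ω) 0 ∂P :=
      aux_wmap_integral_eq (hf0.comp hV₁) (hξ0m.max measurable_const)
        (fun ω => hf00 _) (fun ω => le_max_right _ _)
        (hb₁ := Filter.Eventually.of_forall fun ω => hCf' _)
        (hb₂ := by
          filter_upwards [hξ0b] with ω hω
          rw [abs_of_nonneg (le_max_right (ξ0 ω) 0)]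
          exact max_le (abs_le.1 hω).2 hCf'0)
        hV₂ hrect hg
    calc ∫ ω, f0 (F ω, Xv ω) * g (Gv ω, Xv ω) ∂P
        = ∫ ω, g (Gv ω, Xv ω) * f0 (F ω, Xv ω) ∂P :=
          integral_congr_ae (Filter.Eventually.of_forall fun ω => mul_comm _ _)
      _ = ∫ ω, g (Gv ω, Xv ω) * max (ξ0 ω) 0 ∂P := hkey
      _ = ∫ ω, ξ0 ω * g (Gv ω, Xv ω) ∂P := by
          refine integral_congr_ae ?_
          filter_upwards [hξ00] with ω hω
          rw [max_eq_left hω]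
          ring
  -- split f into positive and negative parts
  set fp : γ₁ × δ → ℝ := fun x => max (f x) 0 with hfpdef
  set fn : γ₁ × δ → ℝ := fun x => max (-f x) 0 with hfndef
  have hfpm : Measurable fp := hf.max measurable_const
  have hfnm : Measurable fn := hf.neg.max measurable_const
  have hfpb : ∀ x, |fp x| ≤ Cf := fun x => by
    rw [abs_of_nonneg (le_max_right _ _)]
    exact max_le (abs_le.1 (hCf x)).2 hCf0
  have hfnb : ∀ x, |fn x| ≤ Cf := fun x => by
    rw [abs_of_nonneg (le_max_right _ _)]
    exact max_le (le_trans (neg_le_abs _) (hCf x)) hCf0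
  have hsub : ∀ x, f x = fp x - fn x := fun x => (max_zero_sub_max_neg_zero_eq_self _).symm
  have hintp : Integrable (fun ω => fp (F ω, Xv ω)) P :=
    aux_integrable_of_ae_bdd (P:=P) ((hfpm.comp hV₁).aestronglyMeasurable :)
      (Filter.Eventually.of_forall fun ω => hfpb _)
  have hintn : Integrable (fun ω => fn (F ω, Xv ω)) P :=
    aux_integrable_of_ae_bdd (P:=P) ((hfnm.comp hV₁).aestronglyMeasurable :)
      (Filter.Eventually.of_forall fun ω => hfnb _)
  have hmulp : Integrable (fun ω => fp (F ω, Xv ω) * g (Gv ω, Xv ω)) P :=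
    aux_integrable_of_ae_bdd (P:=P) (((hfpm.comp hV₁).mul hgV₂).aestronglyMeasurable :)
      (C := Cf * Cg) (Filter.Eventually.of_forall fun ω => by
        rw [abs_mul]; exact mul_le_mul (hfpb _) (hCg _) (abs_nonneg _) hCf0)
  have hmuln : Integrable (fun ω => fn (F ω, Xv ω) * g (Gv ω, Xv ω)) P :=
    aux_integrable_of_ae_bdd (P:=P) (((hfnm.comp hV₁).mul hgV₂).aestronglyMeasurable :)
      (C := Cf * Cg) (Filter.Eventually.of_forall fun ω => by
        rw [abs_mul]; exact mul_le_mul (hfnb _) (hCg _) (abs_nonneg _) hCf0)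
  set ξp : Ω → ℝ := P[fun ω' => fp (F ω', Xv ω')|m₀] with hξpdef
  set ξn : Ω → ℝ := P[fun ω' => fn (F ω', Xv ω')|m₀] with hξndef
  have hξpb : ∀ᵐ ω ∂P, |ξp ω| ≤ Cf :=
    aux_condexp_abs_le (Filter.Eventually.of_forall fun ω => hfpb _)
  have hξnb : ∀ᵐ ω ∂P, |ξn ω| ≤ Cf :=
    aux_condexp_abs_le (Filter.Eventually.of_forall fun ω => hfnb _)
  have hξpaesm : AEStronglyMeasurable[mΩ] ξp P :=
    (((stronglyMeasurable_condExp : StronglyMeasurable[m₀] ξp).mono hm₀).measurable).aestronglyMeasurable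
  have hξnaesm : AEStronglyMeasurable[mΩ] ξn P :=
    (((stronglyMeasurable_condExp : StronglyMeasurable[m₀] ξn).mono hm₀).measurable).aestronglyMeasurable
  have hmulp' : Integrable (fun ω => ξp ω * g (Gv ω, Xv ω)) P :=
    aux_integrable_of_ae_bdd (P:=P) (hξpaesm.mul (hgV₂.aestronglyMeasurable :))
      (C := Cf * Cg) (by
        filter_upwards [hξpb] with ω hω
        rw [abs_mul]; exact mul_le_mul hω (hCg _) (abs_nonneg _) hCf0)
  have hmuln' : Integrable (fun ω => ξn ω * g (Gv ω, Xv ω)) P :=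
    aux_integrable_of_ae_bdd (P:=P) (hξnaesm.mul (hgV₂.aestronglyMeasurable :))
      (C := Cf * Cg) (by
        filter_upwards [hξnb] with ω hω
        rw [abs_mul]; exact mul_le_mul hω (hCg _) (abs_nonneg _) hCf0)
  have hcesub : (P[fun ω' => f (F ω', Xv ω')|m₀]) =ᵐ[P] fun ω => ξp ω - ξn ω := by
    have h0 : (fun ω' => f (F ω', Xv ω'))
        = (fun ω' => fp (F ω', Xv ω')) - (fun ω' => fn (F ω', Xv ω')) := by
      funext ω; simp only [Pi.sub_apply]; rw [hsub]
    rw [h0]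
    exact condExp_sub hintp hintn m₀
  calc ∫ ω, f (F ω, Xv ω) * g (Gv ω, Xv ω) ∂P
      = ∫ ω, fp (F ω, Xv ω) * g (Gv ω, Xv ω) - fn (F ω, Xv ω) * g (Gv ω, Xv ω) ∂P :=
        integral_congr_ae (Filter.Eventually.of_forall fun ω => by simp only [hsub]; ring)
    _ = (∫ ω, fp (F ω, Xv ω) * g (Gv ω, Xv ω) ∂P)
          - ∫ ω, fn (F ω, Xv ω) * g (Gv ω, Xv ω) ∂P := integral_sub hmulp hmuln
    _ = (∫ ω, ξp ω * g (Gv ω, Xv ω) ∂P) - ∫ ω, ξn ω * g (Gv ω, Xv ω) ∂P := by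
        rw [main0 fp hfpm Cf hfpb (fun x => le_max_right _ _),
          main0 fn hfnm Cf hfnb (fun x => le_max_right _ _)]
    _ = ∫ ω, ξp ω * g (Gv ω, Xv ω) - ξn ω * g (Gv ω, Xv ω) ∂P :=
        (integral_sub hmulp' hmuln').symm
    _ = ∫ ω, (P[fun ω' => f (F ω', Xv ω')|m₀]) ω * g (Gv ω, Xv ω) ∂P := by
        refine integral_congr_ae ?_
        filter_upwards [hcesub] with ω hω
        rw [hω]
        ring

lemma aux_bridge_one {m₀ m₁ : MeasurableSpace Ω} (h01 : m₀ ≤ m₁) (h1 : m₁ ≤ mΩ)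
    {κ Y s : Ω → ℝ}
    (hκ : StronglyMeasurable[m₁] κ) (hκb : ∀ ω, |κ ω| ≤ 1)
    (hY : Integrable Y P)
    (hs : StronglyMeasurable[m₀] s) (hspos : ∀ᵐ ω ∂P, 0 < s ω)
    (hbr : (fun ω => κ ω * (P[Y|m₁]) ω) =ᵐ[P] fun ω => κ ω * (s ω)⁻¹)
    (hEκ : (P[κ|m₀]) =ᵐ[P] s) :
    (P[fun ω => κ ω * Y ω|m₀]) =ᵐ[P] fun _ => 1 := by
  have hκaesm : AEStronglyMeasurable[mΩ] κ P := (hκ.mono h1).aestronglyMeasurable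
  have hκint : Integrable κ P :=
    aux_integrable_of_ae_bdd (P:=P) hκaesm (Filter.Eventually.of_forall hκb)
  have hκY : Integrable (fun ω => κ ω * Y ω) P := hY.bdd_mul hκaesm
    (Filter.Eventually.of_forall fun ω => by simpa [Real.norm_eq_abs] using hκb ω)
  have h2 : P[fun ω => κ ω * Y ω|m₀] =ᵐ[P] P[P[fun ω => κ ω * Y ω|m₁]|m₀] :=
    (condExp_condExp_of_le h01 h1).symm
  have h3 : P[fun ω => κ ω * Y ω|m₁] =ᵐ[P] fun ω => κ ω * (P[Y|m₁]) ω := by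
    have := condExp_mul_of_stronglyMeasurable_left hκ (g := Y) hκY hY
    exact this
  have h4 : P[fun ω => κ ω * Y ω|m₁] =ᵐ[P] fun ω => κ ω * (s ω)⁻¹ := h3.trans hbr
  have hsinv_int : Integrable (fun ω => κ ω * (s ω)⁻¹) P := integrable_condExp.congr h4
  have hsinv_sm : StronglyMeasurable[m₀] (fun ω => (s ω)⁻¹) :=
    (hs.measurable.inv).stronglyMeasurable
  have h5 : P[fun ω => κ ω * (s ω)⁻¹|m₀] =ᵐ[P] fun ω => (s ω)⁻¹ * (P[κ|m₀]) ω := by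
    have hint2 : Integrable (fun ω => (s ω)⁻¹ * κ ω) P :=
      hsinv_int.congr (Filter.Eventually.of_forall fun ω => mul_comm _ _)
    have hmul := condExp_mul_of_stronglyMeasurable_left hsinv_sm (g := κ) hint2 hκint
    have hcongr : P[fun ω => κ ω * (s ω)⁻¹|m₀] =ᵐ[P] P[fun ω => (s ω)⁻¹ * κ ω|m₀] :=
      condExp_congr_ae (Filter.Eventually.of_forall fun ω => mul_comm _ _)
    exact hcongr.trans hmul
  have h6 : P[P[fun ω => κ ω * Y ω|m₁]|m₀] =ᵐ[P] P[fun ω => κ ω * (s ω)⁻¹|m₀] :=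
    condExp_congr_ae h4
  refine h2.trans (h6.trans (h5.trans ?_))
  filter_upwards [hEκ, hspos] with ω hω hpos
  rw [hω]
  exact inv_mul_cancel₀ (ne_of_gt hpos)

lemma aux_integrable_CD {m : MeasurableSpace Ω} (hm : m ≤ mΩ)
    {Cind : Ω → ℝ} (hCm : Measurable[mΩ] Cind) (hC0 : ∀ ω, 0 ≤ Cind ω) (hC1 : ∀ ω, Cind ω ≤ 1)
    {D : Ω → ℝ} (hD : StronglyMeasurable[m] D) (hD0 : ∀ ω, 0 ≤ D ω)
    (hDg : ∀ᵐ ω ∂P, D ω * (P[Cind|m]) ω ≤ 1) :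
    Integrable (fun ω => Cind ω * D ω) P := by
  have hDm : Measurable[mΩ] D := (hD.mono hm).measurable
  have hCint : Integrable Cind P :=
    aux_integrable_of_ae_bdd (P:=P) (hCm.aestronglyMeasurable :)
      (Filter.Eventually.of_forall fun ω => abs_le.2 ⟨le_trans (by norm_num) (hC0 ω), hC1 ω⟩)
  have hg'0 : ∀ᵐ ω ∂P, 0 ≤ (P[Cind|m]) ω :=
    condExp_nonneg (Filter.Eventually.of_forall fun ω => hC0 ω)
  have hg'b : ∀ᵐ ω ∂P, |(P[Cind|m]) ω| ≤ 1 :=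
    aux_condexp_abs_le (Filter.Eventually.of_forall fun ω =>
      abs_le.2 ⟨le_trans (by norm_num) (hC0 ω), hC1 ω⟩)
  have hbdd : ∀ n : ℕ, ∫ ω, Cind ω * min (D ω) n ∂P ≤ 1 := by
    intro n
    have hsm : StronglyMeasurable[m] (fun ω => min (D ω) (n:ℝ)) :=
      ((hD.measurable.min measurable_const).stronglyMeasurable :)
    have hminb : ∀ᵐ ω ∂P, |min (D ω) (n:ℝ)| ≤ (n:ℝ) :=
      Filter.Eventually.of_forall fun ω => by
        rw [abs_of_nonneg (le_min (hD0 ω) (Nat.cast_nonneg n))]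
        exact min_le_right _ _
    have heq : ∫ ω, min (D ω) (n:ℝ) * Cind ω ∂P
        = ∫ ω, min (D ω) (n:ℝ) * (P[Cind|m]) ω ∂P :=
      aux_integral_mul_condexp hm hsm hminb hCint
    have h2 : ∫ ω, min (D ω) (n:ℝ) * (P[Cind|m]) ω ∂P ≤ ∫ _ω, (1:ℝ) ∂P := by
      refine integral_mono_ae ?_ (integrable_const 1) ?_
      · exact aux_integrable_of_ae_bdd (P:=P)
          (((hDm.min measurable_const).mul
            ((stronglyMeasurable_condExp.mono hm).measurable)).aestronglyMeasurable :)
          (C := (n:ℝ) * 1) (by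
            filter_upwards [hg'b] with ω hω
            rw [abs_mul]
            refine mul_le_mul ?_ hω (abs_nonneg _) (Nat.cast_nonneg n)
            rw [abs_of_nonneg (le_min (hD0 ω) (Nat.cast_nonneg n))]
            exact min_le_right _ _)
      · filter_upwards [hDg, hg'0] with ω h1 h0
        calc min (D ω) (n:ℝ) * (P[Cind|m]) ω ≤ D ω * (P[Cind|m]) ω :=
              mul_le_mul_of_nonneg_right (min_le_left _ _) h0
          _ ≤ 1 := h1
    calc ∫ ω, Cind ω * min (D ω) n ∂P
        = ∫ ω, min (D ω) (n:ℝ) * Cind ω ∂P :=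
          integral_congr_ae (Filter.Eventually.of_forall fun ω => mul_comm _ _)
      _ ≤ ∫ _ω, (1:ℝ) ∂P := heq ▸ h2
      _ = 1 := by simp
  have hCDm : Measurable[mΩ] (fun ω => Cind ω * D ω) := hCm.mul hDm
  refine ⟨hCDm.aestronglyMeasurable, ?_⟩
  rw [hasFiniteIntegral_iff_ofReal (Filter.Eventually.of_forall fun ω =>
    mul_nonneg (hC0 ω) (hD0 ω))]
  have hsup : ∀ ω, (⨆ n : ℕ, ENNReal.ofReal (Cind ω * min (D ω) n))
      = ENNReal.ofReal (Cind ω * D ω) := by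
    intro ω
    refine le_antisymm (iSup_le fun n => ENNReal.ofReal_le_ofReal
      (mul_le_mul_of_nonneg_left (min_le_left _ _) (hC0 ω))) ?_
    refine le_iSup_of_le ⌈D ω⌉₊ ?_
    rw [min_eq_left (Nat.le_ceil _)]
  have hmono : Monotone (fun (n : ℕ) (ω : Ω) => ENNReal.ofReal (Cind ω * min (D ω) n)) := by
    intro n k hnk ω
    exact ENNReal.ofReal_le_ofReal (mul_le_mul_of_nonneg_left
      (min_le_min le_rfl (Nat.cast_le.2 hnk)) (hC0 ω))
  have hlim : ∫⁻ ω, ENNReal.ofReal (Cind ω * D ω) ∂P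
      = ⨆ n : ℕ, ∫⁻ ω, ENNReal.ofReal (Cind ω * min (D ω) n) ∂P := by
    rw [← lintegral_iSup (f := fun n ω => ENNReal.ofReal (Cind ω * min (D ω) n)) (fun n => (hCm.mul (hDm.min measurable_const)).ennreal_ofReal) hmono]
    refine lintegral_congr fun ω => (hsup ω).symm
  rw [hlim]
  refine lt_of_le_of_lt (iSup_le fun n => ?_) (by norm_num : (1:ℝ≥0∞) < ⊤)
  have hint_n : Integrable (fun ω => Cind ω * min (D ω) n) P :=
    aux_integrable_of_ae_bdd (P:=P)
      ((hCm.mul (hDm.min measurable_const)).aestronglyMeasurable :)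
      (C := 1 * (n:ℝ)) (Filter.Eventually.of_forall fun ω => by
        rw [abs_mul]
        refine mul_le_mul (abs_le.2 ⟨le_trans (by norm_num) (hC0 ω), hC1 ω⟩) ?_
          (abs_nonneg _) zero_le_one
        rw [abs_of_nonneg (le_min (hD0 ω) (Nat.cast_nonneg n))]
        exact min_le_right _ _)
  rw [← ofReal_integral_eq_lintegral_ofReal hint_n
    (Filter.Eventually.of_forall fun ω => mul_nonneg (hC0 ω) (le_min (hD0 ω) (Nat.cast_nonneg n)))]
  calc ENNReal.ofReal (∫ ω, Cind ω * min (D ω) n ∂P) ≤ ENNReal.ofReal 1 :=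
        ENNReal.ofReal_le_ofReal (hbdd n)
    _ = 1 := by norm_num

lemma aux_censor {m : MeasurableSpace Ω} (hm : m ≤ mΩ)
    {k Tind Cind : Ω → ℝ}
    (hk : StronglyMeasurable[m] k) {Ck : ℝ} (hkb : ∀ ω, |k ω| ≤ Ck)
    (hTm : Measurable[mΩ] Tind) (hT0 : ∀ ω, 0 ≤ Tind ω) (hT1 : ∀ ω, Tind ω ≤ 1)
    (hCm : Measurable[mΩ] Cind) (hC0 : ∀ ω, 0 ≤ Cind ω) (hC1 : ∀ ω, Cind ω ≤ 1)
    (hfact : (P[fun ω => Tind ω * Cind ω|m]) =ᵐ[P]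
      fun ω => (P[Tind|m]) ω * (P[Cind|m]) ω)
    (hpos : ∀ᵐ ω ∂P, 0 < (P[Cind|m]) ω) :
    Integrable (fun ω => k ω * (Tind ω * Cind ω * ((P[Cind|m]) ω)⁻¹)) P ∧
    ∫ ω, k ω * (Tind ω * Cind ω * ((P[Cind|m]) ω)⁻¹) ∂P = ∫ ω, k ω * Tind ω ∂P := by
  have hae : (MeasureTheory.ae P).NeBot := ae_neBot.2 (IsProbabilityMeasure.ne_zero P)
  have hCk0 : 0 ≤ Ck := by
    have h : ∀ᵐ ω ∂P, |k ω| ≤ Ck := Filter.Eventually.of_forall hkb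
    exact le_trans (abs_nonneg _) h.exists.choose_spec
  set g' : Ω → ℝ := P[Cind|m] with hg'def
  have hg'sm : StronglyMeasurable[m] g' := stronglyMeasurable_condExp
  have hg'm : Measurable[mΩ] g' := (hg'sm.mono hm).measurable
  set D : Ω → ℝ := fun ω => max ((g' ω)⁻¹) 0 with hDdef
  have hDsm : StronglyMeasurable[m] D :=
    ((hg'sm.measurable.inv.max measurable_const).stronglyMeasurable :)
  have hDm : Measurable[mΩ] D := (hDsm.mono hm).measurable
  have hD0 : ∀ ω, 0 ≤ D ω := fun ω => le_max_right _ _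
  have hDinv : ∀ᵐ ω ∂P, D ω = (g' ω)⁻¹ := by
    filter_upwards [hpos] with ω h
    exact max_eq_left (le_of_lt (inv_pos.2 h))
  have hDg : ∀ᵐ ω ∂P, D ω * g' ω = 1 := by
    filter_upwards [hDinv, hpos] with ω h1 h2
    rw [h1]
    exact inv_mul_cancel₀ (ne_of_gt h2)
  have hCD : Integrable (fun ω => Cind ω * D ω) P :=
    aux_integrable_CD hm hCm hC0 hC1 hDsm hD0
      (by filter_upwards [hDg] with ω h; rw [h])
  have hTCint : Integrable (fun ω => Tind ω * Cind ω) P :=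
    aux_integrable_of_ae_bdd (P:=P) ((hTm.mul hCm).aestronglyMeasurable :)
      (C := 1) (Filter.Eventually.of_forall fun ω => by
        rw [abs_mul, abs_of_nonneg (hT0 ω), abs_of_nonneg (hC0 ω)]
        exact mul_le_one₀ (hT1 ω) (hC0 ω) (hC1 ω))
  have hTint : Integrable Tind P :=
    aux_integrable_of_ae_bdd (P:=P) (hTm.aestronglyMeasurable :)
      (C := 1) (Filter.Eventually.of_forall fun ω =>
        abs_le.2 ⟨le_trans (by norm_num) (hT0 ω), hT1 ω⟩)
  have hkm : Measurable[mΩ] k := (hk.mono hm).measurable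
  have hF_int : Integrable (fun ω => k ω * D ω * (Tind ω * Cind ω)) P := by
    refine Integrable.mono' (hCD.const_mul Ck)
      (((hkm.mul hDm).mul (hTm.mul hCm)).aestronglyMeasurable :) ?_
    refine Filter.Eventually.of_forall fun ω => ?_
    rw [Real.norm_eq_abs, abs_mul, abs_mul, abs_mul,
      abs_of_nonneg (hD0 ω), abs_of_nonneg (hT0 ω), abs_of_nonneg (hC0 ω)]
    calc |k ω| * D ω * (Tind ω * Cind ω) ≤ Ck * D ω * (1 * Cind ω) := by
          refine mul_le_mul (mul_le_mul (hkb ω) le_rfl (hD0 ω) hCk0)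
            (mul_le_mul (hT1 ω) le_rfl (hC0 ω) zero_le_one)
            (mul_nonneg (hT0 ω) (hC0 ω)) (mul_nonneg hCk0 (hD0 ω))
      _ = Ck * (Cind ω * D ω) := by ring
  have hcond : (P[fun ω => k ω * D ω * (Tind ω * Cind ω)|m])
      =ᵐ[P] fun ω => k ω * D ω * (P[fun ω => Tind ω * Cind ω|m]) ω := by
    have := condExp_mul_of_stronglyMeasurable_left (hk.mul hDsm) (g := fun ω => Tind ω * Cind ω)
      hF_int hTCint
    exact this
  have h7 : (P[fun ω => k ω * D ω * (Tind ω * Cind ω)|m])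
      =ᵐ[P] fun ω => k ω * (P[Tind|m]) ω := by
    refine hcond.trans ?_
    filter_upwards [hfact, hDg] with ω h1 h2
    rw [h1]
    have : k ω * D ω * ((P[Tind|m]) ω * g' ω)
        = k ω * (P[Tind|m]) ω * (D ω * g' ω) := by ring
    rw [this, h2, mul_one]
  have hIcong : Integrable (fun ω => k ω * (Tind ω * Cind ω * (g' ω)⁻¹)) P := by
    refine hF_int.congr ?_
    filter_upwards [hDinv] with ω h
    rw [← h]
    ring
  refine ⟨hIcong, ?_⟩
  calc ∫ ω, k ω * (Tind ω * Cind ω * (g' ω)⁻¹) ∂P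
      = ∫ ω, k ω * D ω * (Tind ω * Cind ω) ∂P := by
        refine integral_congr_ae ?_
        filter_upwards [hDinv] with ω h
        rw [h]
        ring
    _ = ∫ ω, (P[fun ω => k ω * D ω * (Tind ω * Cind ω)|m]) ω ∂P :=
        (integral_condExp hm).symm
    _ = ∫ ω, k ω * (P[Tind|m]) ω ∂P := integral_congr_ae h7
    _ = ∫ ω, k ω * Tind ω ∂P :=
        (aux_integral_mul_condexp hm hk (Filter.Eventually.of_forall hkb) hTint).symm

end Helpers

/-- Conditional independence of `F` and `G` given the σ-algebra `m`: all conditional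
covariances of bounded measurable functionals of the two groups vanish. -/
def CondIndepGiven {Ω α β : Type*} [MeasurableSpace Ω] [MeasurableSpace α] [MeasurableSpace β]
    (P : Measure Ω) (m : MeasurableSpace Ω) (F : Ω → α) (G : Ω → β) : Prop :=
  ∀ (f : α → ℝ) (g : β → ℝ), Measurable f → Measurable g →
    (∃ C, ∀ x, |f x| ≤ C) → (∃ C, ∀ x, |g x| ≤ C) →
    (P[fun ω => f (F ω) * g (G ω)|m]) =ᵐ[P]
      fun ω => (P[fun ω' => f (F ω')|m]) ω * (P[fun ω' => g (G ω')|m]) ω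

/-- **Censored-data proximal doubly robust identification when the treatment bridge is
correct.** If `q` solves the latent-level treatment bridge equation, proxy independence
holds, `T ⟂ C | σ(A,X,Z,W)`, and `G t` is a positive version of `P(C > t | σ(A,X,Z,W))`,
then for every `a ∈ {0,1}`, `t ∈ ℝ`, and bounded measurable `h̃` of `(W,A,X)`,
`P(T(a) > t) = E[ 1{A = a} ⬝ q(Z,A,X) ⬝ (1{T > t} ⬝ 1{C > t}/G t − h̃(W,A,X)) + h̃(W,a,X) ]`. -/
theorem censored_doubly_robust_under_treatment_bridge
    {Ω 𝓤 𝓧 𝓩 𝓦 : Type*} [MeasurableSpace Ω]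
    [MeasurableSpace 𝓤] [StandardBorelSpace 𝓤] [MeasurableSpace 𝓧] [StandardBorelSpace 𝓧]
    [MeasurableSpace 𝓩] [StandardBorelSpace 𝓩] [MeasurableSpace 𝓦] [StandardBorelSpace 𝓦]
    (P : Measure Ω) [IsProbabilityMeasure P]
    -- the random variables
    (A : Ω → ℝ) (T1 T0 : Ω → ℝ) (C : Ω → ℝ) (U : Ω → 𝓤) (X : Ω → 𝓧) (Z : Ω → 𝓩) (W : Ω → 𝓦)
    (hA : Measurable A) (hT1 : Measurable T1) (hT0 : Measurable T0) (hC : Measurable C)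
    (hU : Measurable U) (hX : Measurable X) (hZ : Measurable Z) (hW : Measurable W)
    (hA01 : ∀ ω, A ω = 0 ∨ A ω = 1)
    -- observed outcome (consistency)
    (T : Ω → ℝ) (hT : ∀ ω, T ω = A ω * T1 ω + (1 - A ω) * T0 ω)
    -- positivity for a version `π` of `P(A = 1 | σ(U, X))`
    (π : Ω → ℝ)
    (hπver : π =ᵐ[P] P[A|MeasurableSpace.comap (fun ω => (U ω, X ω)) inferInstance])
    (hπpos : ∀ᵐ ω ∂P, 0 < π ω ∧ π ω < 1)
    -- `q` is a bounded measurable function of `(Z, A, X)`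
    (q : 𝓩 × ℝ × 𝓧 → ℝ) (hq : Measurable q) (hqbdd : ∃ Cq, ∀ x, |q x| ≤ Cq)
    -- latent-level treatment bridge equation: `E[q(Z,A,X) | σ(A,U,X)] = 1/P(A|σ(U,X))` a.s.
    (hbridge : (P[(fun ω => q (Z ω, A ω, X ω))|
        MeasurableSpace.comap (fun ω => (A ω, U ω, X ω)) inferInstance])
      =ᵐ[P] fun ω => (A ω * π ω + (1 - A ω) * (1 - π ω))⁻¹)
    -- proxy independence: `(Z, A) ⟂ (W, T(a)) | σ(U, X)` for `a = 1, 0`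
    (hproxy1 : CondIndepGiven P (MeasurableSpace.comap (fun ω => (U ω, X ω)) inferInstance)
      (fun ω => (Z ω, A ω)) (fun ω => (W ω, T1 ω)))
    (hproxy0 : CondIndepGiven P (MeasurableSpace.comap (fun ω => (U ω, X ω)) inferInstance)
      (fun ω => (Z ω, A ω)) (fun ω => (W ω, T0 ω)))
    -- independent censoring: `T ⟂ C | σ(A, X, Z, W)`
    (hTC : CondIndepGiven P
      (MeasurableSpace.comap (fun ω => (A ω, X ω, Z ω, W ω)) inferInstance) T C)
    -- `G t` is a version of `P(C > t | σ(A, X, Z, W))` with `G t > 0` a.s.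
    (G : ℝ → Ω → ℝ)
    (hGver : ∀ t : ℝ, G t =ᵐ[P] P[(fun ω => if t < C ω then (1 : ℝ) else 0)|
        MeasurableSpace.comap (fun ω => (A ω, X ω, Z ω, W ω)) inferInstance])
    (hGpos : ∀ t : ℝ, ∀ᵐ ω ∂P, 0 < G t ω) :
    ∀ a : ℝ, (a = 0 ∨ a = 1) → ∀ t : ℝ,
      ∀ htil : 𝓦 × ℝ × 𝓧 → ℝ, Measurable htil → (∃ Ch, ∀ x, |htil x| ≤ Ch) →
        (P {ω | t < (if a = 1 then T1 ω else T0 ω)}).toReal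
          = ∫ ω, (if A ω = a then (1 : ℝ) else 0) * q (Z ω, A ω, X ω) *
                ((if t < T ω then (1 : ℝ) else 0) * (if t < C ω then (1 : ℝ) else 0)
                    / G t ω
                  - htil (W ω, A ω, X ω))
              + htil (W ω, a, X ω) ∂P := by
  intro a ha t htil hhtilm hhtilb
  rename_i mΩ iU sU iX sX iZ sZ iW sW iP
  obtain ⟨Cq, hCq⟩ := hqbdd
  obtain ⟨Ch, hCh⟩ := hhtilb
  have hae : (MeasureTheory.ae P).NeBot := ae_neBot.2 (IsProbabilityMeasure.ne_zero P)
  have hCq0 : 0 ≤ Cq := by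
    have h : ∀ᵐ ω ∂P, |q (Z ω, A ω, X ω)| ≤ Cq := Filter.Eventually.of_forall fun ω => hCq _
    exact le_trans (abs_nonneg _) h.exists.choose_spec
  have hCh0 : 0 ≤ Ch := by
    have h : ∀ᵐ ω ∂P, |htil (W ω, a, X ω)| ≤ Ch := Filter.Eventually.of_forall fun ω => hCh _
    exact le_trans (abs_nonneg _) h.exists.choose_spec
  have hGvt := hGver t
  have hGpt := hGpos t
  -- σ-algebras
  set m₀ := MeasurableSpace.comap (fun ω => (U ω, X ω)) inferInstance with hm₀def
  set m₁ := MeasurableSpace.comap (fun ω => (A ω, U ω, X ω)) inferInstance with hm₁def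
  set m := MeasurableSpace.comap (fun ω => (A ω, X ω, Z ω, W ω)) inferInstance with hmdef
  have hm₀ : m₀ ≤ mΩ := (hU.prodMk hX).comap_le
  have hm₁ : m₁ ≤ mΩ := (hA.prodMk (hU.prodMk hX)).comap_le
  have hm : m ≤ mΩ := (hA.prodMk (hX.prodMk (hZ.prodMk hW))).comap_le
  have hm₀₁ : m₀ ≤ m₁ := by
    have hcomp : (fun ω => (U ω, X ω))
        = (fun p : ℝ × 𝓤 × 𝓧 => p.2) ∘ (fun ω => (A ω, U ω, X ω)) := rfl
    rw [hm₀def, hcomp, ← MeasurableSpace.comap_comp]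
    exact MeasurableSpace.comap_mono measurable_snd.comap_le
  have hbase₀ : Measurable[m₀] (fun ω => (U ω, X ω)) := Measurable.of_comap_le hm₀def.ge
  have hbasem : Measurable[m] (fun ω => (A ω, X ω, Z ω, W ω)) := Measurable.of_comap_le hmdef.ge
  have hXm₀ : Measurable[m₀] X := measurable_snd.comp hbase₀
  -- observed outcome is measurable
  have hTm : Measurable[mΩ] T := by
    have h : T = fun ω => A ω * T1 ω + (1 - A ω) * T0 ω := funext hT
    rw [h]
    exact (hA.mul hT1).add ((measurable_const.sub hA).mul hT0)
  set Ta : Ω → ℝ := fun ω => if a = 1 then T1 ω else T0 ω with hTadef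
  have hTam : Measurable[mΩ] Ta := by
    rw [hTadef]
    by_cases h : a = 1
    · simpa [h] using hT1
    · simpa [h] using hT0
  have hproxyA : @CondIndepGiven Ω (𝓩 × ℝ) (𝓦 × ℝ) mΩ _ _ P m₀
      (fun ω => (Z ω, A ω)) (fun ω => (W ω, Ta ω)) := by
    rw [hTadef]
    by_cases h : a = 1
    · simpa [h] using hproxy1
    · simpa [h] using hproxy0
  set κ : Ω → ℝ := fun ω => if A ω = a then (1:ℝ) else 0 with hκdef
  have hκb : ∀ ω, |κ ω| ≤ 1 := fun ω => by
    rw [hκdef]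
    by_cases h : A ω = a <;> simp [h]
  have hκm : Measurable[mΩ] κ := by
    rw [hκdef]
    exact Measurable.ite (hA (measurableSet_singleton a)) measurable_const measurable_const
  have hκsm₁ : StronglyMeasurable[m₁] κ := by
    have hbase₁ : Measurable[m₁] (fun ω => (A ω, U ω, X ω)) := Measurable.of_comap_le hm₁def.ge
    have h : κ = (fun p : ℝ × 𝓤 × 𝓧 => if p.1 = a then (1:ℝ) else 0)
        ∘ (fun ω => (A ω, U ω, X ω)) := rfl
    rw [h]
    refine Measurable.stronglyMeasurable (Measurable.comp ?_ hbase₁)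
    exact Measurable.ite (measurable_fst (measurableSet_singleton a))
      measurable_const measurable_const
  set Y : Ω → ℝ := fun ω => q (Z ω, A ω, X ω) with hYdef
  have hYm : Measurable[mΩ] Y := hq.comp (hZ.prodMk (hA.prodMk hX))
  have hYb : ∀ ω, |Y ω| ≤ Cq := fun ω => hCq _
  have hYint : Integrable Y P :=
    aux_integrable_of_ae_bdd (P:=P) (hYm.aestronglyMeasurable :)
      (Filter.Eventually.of_forall hYb)
  -- the treatment bridge forces `E[κ Y | σ(U,X)] = 1`
  set π' : Ω → ℝ := P[A|m₀] with hπ'def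
  have hπ'pos : ∀ᵐ ω ∂P, 0 < π' ω ∧ π' ω < 1 := by
    filter_upwards [hπpos, hπver] with ω h1 h2
    rw [← h2]
    exact h1
  set s : Ω → ℝ := fun ω => if a = 1 then π' ω else 1 - π' ω with hsdef
  have hssm : StronglyMeasurable[m₀] s := by
    rw [hsdef]
    by_cases h : a = 1 <;> simp only [h, if_true, if_false]
    · exact stronglyMeasurable_condExp
    · exact stronglyMeasurable_const.sub stronglyMeasurable_condExp
  have hspos : ∀ᵐ ω ∂P, 0 < s ω := by
    filter_upwards [hπ'pos] with ω hω
    rw [hsdef]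
    by_cases h : a = 1 <;> simp only [h, if_true, if_false]
    · exact hω.1
    · linarith [hω.2]
  have hAint : Integrable A P :=
    aux_integrable_of_ae_bdd (P:=P) (hA.aestronglyMeasurable :) (C := 1)
      (Filter.Eventually.of_forall fun ω => by rcases hA01 ω with h | h <;> simp [h])
  have hEκ : (P[κ|m₀]) =ᵐ[P] s := by
    have hκfun : κ = fun ω => if a = 1 then A ω else 1 - A ω := by
      funext ω
      rw [hκdef]
      rcases ha with rfl | rfl <;> rcases hA01 ω with h0 | h0 <;> simp [h0] <;> norm_num
    rw [hκfun, hsdef]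
    by_cases h : a = 1
    · simp only [h, if_true]
      exact Filter.EventuallyEq.rfl
    · simp only [h, if_false]
      have h1 : P[(fun _ => (1:ℝ)) - A|m₀] =ᵐ[P] P[fun _ => (1:ℝ)|m₀] - P[A|m₀] :=
        condExp_sub (integrable_const 1) hAint m₀
      have h2 : P[fun _ => (1:ℝ)|m₀] = fun _ => (1:ℝ) := condExp_const hm₀ 1
      refine Filter.EventuallyEq.trans (h1 :) ?_
      rw [h2]
      exact Filter.EventuallyEq.rfl
  have hbr : (fun ω => κ ω * (P[Y|m₁]) ω) =ᵐ[P] fun ω => κ ω * (s ω)⁻¹ := by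
    filter_upwards [hbridge, hπver] with ω h1 h2
    have h1' : (P[Y|m₁]) ω = (A ω * π ω + (1 - A ω) * (1 - π ω))⁻¹ := h1
    rw [h1', hκdef, hsdef]
    rcases ha with rfl | rfl <;> rcases hA01 ω with h0 | h0 <;> simp [h0, h2] <;> norm_num
  have hone : (P[fun ω => κ ω * Y ω|m₀]) =ᵐ[P] fun _ => (1:ℝ) :=
    aux_bridge_one (P:=P) hm₀₁ hm₁ hκsm₁ hκb hYint hssm hspos hbr hEκ
  -- proxy decoupling
  have hDL : ∀ g : (𝓦 × ℝ) × 𝓧 → ℝ, Measurable g → ∀ Cg : ℝ, (∀ x, |g x| ≤ Cg) →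
      ∫ ω, κ ω * Y ω * g ((W ω, Ta ω), X ω) ∂P = ∫ ω, g ((W ω, Ta ω), X ω) ∂P := by
    intro g hgm Cg hgb
    set fbig : (𝓩 × ℝ) × 𝓧 → ℝ :=
      fun p => (if p.1.2 = a then (1:ℝ) else 0) * q (p.1.1, p.1.2, p.2) with hfbigdef
    have hfbigm : Measurable fbig := by
      rw [hfbigdef]
      refine Measurable.mul ?_ (hq.comp ?_)
      · exact Measurable.ite ((measurable_snd.comp measurable_fst) (measurableSet_singleton a))
          measurable_const measurable_const
      · exact (measurable_fst.comp measurable_fst).prodMk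
          ((measurable_snd.comp measurable_fst).prodMk measurable_snd)
    have hfbigb : ∀ x, |fbig x| ≤ Cq := fun x => by
      rw [hfbigdef]
      by_cases h : x.1.2 = a <;> simp [h, abs_mul]
      · exact hCq _
      · exact hCq0
    have h1 := aux_decouple (P:=P) hm₀ (hZ.prodMk hA) (hW.prodMk hTam) hX hXm₀ hproxyA
      fbig hfbigm hfbigb g hgm hgb
    have h2 : (P[fun ω' => fbig ((Z ω', A ω'), X ω')|m₀]) =ᵐ[P] fun _ => (1:ℝ) := by
      refine Filter.EventuallyEq.trans ?_ hone
      exact condExp_congr_ae (Filter.Eventually.of_forall fun ω => rfl)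
    calc ∫ ω, κ ω * Y ω * g ((W ω, Ta ω), X ω) ∂P
        = ∫ ω, fbig ((Z ω, A ω), X ω) * g ((W ω, Ta ω), X ω) ∂P :=
          integral_congr_ae (Filter.Eventually.of_forall fun ω => rfl)
      _ = ∫ ω, (P[fun ω' => fbig ((Z ω', A ω'), X ω')|m₀]) ω * g ((W ω, Ta ω), X ω) ∂P := h1
      _ = ∫ ω, g ((W ω, Ta ω), X ω) ∂P := by
          refine integral_congr_ae ?_
          filter_upwards [h2] with ω hω
          rw [hω, one_mul]
  -- censoring
  set Tind : Ω → ℝ := fun ω => if t < T ω then (1:ℝ) else 0 with hTinddef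
  set Cind : Ω → ℝ := fun ω => if t < C ω then (1:ℝ) else 0 with hCinddef
  set g'' : Ω → ℝ := P[Cind|m] with hg''def
  have hTindm : Measurable[mΩ] Tind := by
    rw [hTinddef]
    exact Measurable.ite (measurableSet_lt measurable_const hTm)
      measurable_const measurable_const
  have hCindm : Measurable[mΩ] Cind := by
    rw [hCinddef]
    exact Measurable.ite (measurableSet_lt measurable_const hC)
      measurable_const measurable_const
  have hTind0 : ∀ ω, 0 ≤ Tind ω := fun ω => by
    rw [hTinddef]; by_cases h : t < T ω <;> simp [h]
  have hTind1 : ∀ ω, Tind ω ≤ 1 := fun ω => by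
    rw [hTinddef]; by_cases h : t < T ω <;> simp [h]
  have hCind0 : ∀ ω, 0 ≤ Cind ω := fun ω => by
    rw [hCinddef]; by_cases h : t < C ω <;> simp [h]
  have hCind1 : ∀ ω, Cind ω ≤ 1 := fun ω => by
    rw [hCinddef]; by_cases h : t < C ω <;> simp [h]
  have hindm : Measurable (fun x : ℝ => if t < x then (1:ℝ) else 0) :=
    Measurable.ite (measurableSet_lt measurable_const measurable_id)
      measurable_const measurable_const
  have hindb : ∃ c : ℝ, ∀ x : ℝ, |if t < x then (1:ℝ) else 0| ≤ c :=
    ⟨1, fun x => by by_cases h : t < x <;> simp [h]⟩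
  have hfact : (P[fun ω => Tind ω * Cind ω|m]) =ᵐ[P]
      fun ω => (P[Tind|m]) ω * (P[Cind|m]) ω := by
    have := hTC (fun x => if t < x then (1:ℝ) else 0) (fun x => if t < x then (1:ℝ) else 0)
      hindm hindm hindb hindb
    exact this
  have hksm : StronglyMeasurable[m] (fun ω => κ ω * Y ω) := by
    have h : (fun ω => κ ω * Y ω) = (fun p : ℝ × 𝓧 × 𝓩 × 𝓦 =>
        (if p.1 = a then (1:ℝ) else 0) * q (p.2.2.1, p.1, p.2.1))
        ∘ (fun ω => (A ω, X ω, Z ω, W ω)) := rfl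
    rw [h]
    refine Measurable.stronglyMeasurable (Measurable.comp ?_ hbasem)
    refine Measurable.mul ?_ (hq.comp ?_)
    · exact Measurable.ite (measurable_fst (measurableSet_singleton a))
        measurable_const measurable_const
    · exact (measurable_fst.comp (measurable_snd.comp measurable_snd)).prodMk
        (measurable_fst.prodMk (measurable_fst.comp measurable_snd))
  have hkb : ∀ ω, |κ ω * Y ω| ≤ Cq := fun ω => by
    rw [hκdef]
    by_cases h : A ω = a <;> simp [h]
    · exact hYb ω
    · exact hCq0
  have hpos'' : ∀ᵐ ω ∂P, 0 < g'' ω := by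
    filter_upwards [hGpt, hGvt] with ω h1 h2
    have h2' : G t ω = g'' ω := h2
    rw [← h2']
    exact h1
  obtain ⟨hI1, hcen⟩ := aux_censor (P:=P) hm hksm hkb hTindm hTind0 hTind1
    hCindm hCind0 hCind1 hfact hpos''
  -- integrability of the pieces
  have hhtam : Measurable[mΩ] (fun ω => htil (W ω, a, X ω)) :=
    hhtilm.comp (hW.prodMk (measurable_const.prodMk hX))
  have hI3 : Integrable (fun ω => htil (W ω, a, X ω)) P :=
    aux_integrable_of_ae_bdd (P:=P) (hhtam.aestronglyMeasurable :)
      (Filter.Eventually.of_forall fun ω => hCh _)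
  have hI2 : Integrable (fun ω => κ ω * Y ω * htil (W ω, a, X ω)) P :=
    aux_integrable_of_ae_bdd (P:=P) (((hκm.mul hYm).mul hhtam).aestronglyMeasurable :)
      (C := Cq * Ch) (Filter.Eventually.of_forall fun ω => by
        rw [abs_mul]
        exact mul_le_mul (hkb ω) (hCh _) (abs_nonneg _) hCq0)
  -- pointwise identifications
  have hswap : ∀ ω, κ ω * Y ω * htil (W ω, A ω, X ω) = κ ω * Y ω * htil (W ω, a, X ω) := by
    intro ω
    by_cases h : A ω = a
    · rw [h]
    · rw [hκdef]
      simp [h]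
  have hTswap : ∀ ω, κ ω * Y ω * Tind ω = κ ω * Y ω * (if t < Ta ω then (1:ℝ) else 0) := by
    intro ω
    by_cases h : A ω = a
    · have hTa : T ω = Ta ω := by
        rw [hT ω, hTadef]
        rcases ha with rfl | rfl
        · rw [h] at *
          norm_num
        · rw [h] at *
          norm_num
      rw [hTinddef]
      simp only [hTa]
    · rw [hκdef]
      simp [h]
  -- main computation
  have hgoalint : ∫ ω, (if A ω = a then (1 : ℝ) else 0) * q (Z ω, A ω, X ω) *
        ((if t < T ω then (1 : ℝ) else 0) * (if t < C ω then (1 : ℝ) else 0) / G t ω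
          - htil (W ω, A ω, X ω)) + htil (W ω, a, X ω) ∂P
      = ∫ ω, (κ ω * Y ω * (Tind ω * Cind ω * (g'' ω)⁻¹)
          - κ ω * Y ω * htil (W ω, a, X ω)) + htil (W ω, a, X ω) ∂P := by
    refine integral_congr_ae ?_
    filter_upwards [hGvt] with ω hG
    have hG' : G t ω = g'' ω := hG
    rw [hκdef, hTinddef, hCinddef] at *
    rw [hG', ← hswap ω]
    rw [hκdef]
    ring
  have e1 : ∫ ω, κ ω * Y ω * (Tind ω * Cind ω * (g'' ω)⁻¹) ∂P
      = (P {ω | t < Ta ω}).toReal := by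
    have hgTm : Measurable (fun p : (𝓦 × ℝ) × 𝓧 => if t < p.1.2 then (1:ℝ) else 0) :=
      Measurable.ite (measurableSet_lt measurable_const (measurable_snd.comp measurable_fst))
        measurable_const measurable_const
    calc ∫ ω, κ ω * Y ω * (Tind ω * Cind ω * (g'' ω)⁻¹) ∂P
        = ∫ ω, κ ω * Y ω * Tind ω ∂P := hcen
      _ = ∫ ω, κ ω * Y ω * (if t < Ta ω then (1:ℝ) else 0) ∂P :=
          integral_congr_ae (Filter.Eventually.of_forall fun ω => hTswap ω)
      _ = ∫ ω, (if t < Ta ω then (1:ℝ) else 0) ∂P := by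
          exact hDL (fun p => if t < p.1.2 then (1:ℝ) else 0) hgTm 1
            (fun x => by by_cases h : t < x.1.2 <;> simp [h])
      _ = (P {ω | t < Ta ω}).toReal := aux_integral_ite_lt (P:=P) hTam t
  have e2 : ∫ ω, κ ω * Y ω * htil (W ω, a, X ω) ∂P = ∫ ω, htil (W ω, a, X ω) ∂P := by
    have hgm : Measurable (fun p : (𝓦 × ℝ) × 𝓧 => htil (p.1.1, a, p.2)) :=
      hhtilm.comp ((measurable_fst.comp measurable_fst).prodMk
        (measurable_const.prodMk measurable_snd))
    exact hDL (fun p => htil (p.1.1, a, p.2)) hgm Ch (fun x => hCh _)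
  have hI1' : Integrable (fun ω => κ ω * Y ω * (Tind ω * Cind ω * (g'' ω)⁻¹)) P := hI1
  have hI12 : Integrable (fun ω => κ ω * Y ω * (Tind ω * Cind ω * (g'' ω)⁻¹)
      - κ ω * Y ω * htil (W ω, a, X ω)) P := hI1'.sub hI2
  rw [hgoalint, integral_add hI12 hI3, integral_sub hI1' hI2, e1, e2]
  show (P {ω | t < Ta ω}).toReal = _
  ring
end

section
/- Let U, X be real random variables, let A : Ω → {0,1} satisfy P(A=1 | σ(U,X)) = (1 + exp(−(0.3 + 0.4·X − 0.6·U)))⁻¹ a.s., and let Z be a real random variable whose conditional distribution given σ(A,U,X) is the Gaussian law N(−0.2 − 0.3·X + 0.65·U, 0.5²) (in particular not depending on A). Then there exist real numbers α₀, α_a, α_z, α_x such that E[ 1 + exp((−1)^{1−A}·(α₀ + α_a·A + α_z·Z + α_x·X)) | σ(A,U,X) ] = 1/P(A | σ(U,X)) a.s., where P(A|σ(U,X)) := A·π + (1−A)·(1−π) with π := P(A=1|σ(U,X)). (Appendix claim that the parametric family q(Z,A,X;α) of equation (19) contains a valid latent-level treatment confounding bridge function for the simulation design.) -/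
open MeasureTheory ProbabilityTheory

lemma gaussian_exp_integral (m c b : ℝ) (v : NNReal) (hv : v ≠ 0) :
    ∫ z, (1 + Real.exp (c + b * z)) ∂(gaussianReal m v)
      = 1 + Real.exp (c + b * m + b ^ 2 * v / 2) := by
  have hv' : (0 : ℝ) < (v : ℝ) := lt_of_le_of_ne v.coe_nonneg (by exact_mod_cast (Ne.symm hv))
  rw [gaussianReal_of_var_ne_zero _ hv]
  have hpdf : gaussianPDF m v = fun z => ((gaussianPDFReal m v z).toNNReal : ENNReal) := by
    funext z; rfl
  rw [hpdf, integral_withDensity_eq_integral_smul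
    ((measurable_gaussianPDFReal m v).real_toNNReal)]
  have hpt : ∀ z, (gaussianPDFReal m v z).toNNReal • (1 + Real.exp (c + b * z))
      = gaussianPDFReal m v z
        + Real.exp (c + b * m + b ^ 2 * v / 2) * gaussianPDFReal (m + b * v) v z := by
    intro z
    rw [NNReal.smul_def, Real.coe_toNNReal _ (gaussianPDFReal_nonneg m v z)]
    simp only [gaussianPDFReal]
    rw [smul_eq_mul, mul_add, mul_one]
    congr 1
    have e1 : -(z - m) ^ 2 / (2 * (v:ℝ)) + (c + b * z)
        = c + b * m + b ^ 2 * (v:ℝ) / 2 + -(z - (m + b * (v:ℝ))) ^ 2 / (2 * (v:ℝ)) := by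
      field_simp
      ring
    rw [mul_assoc, ← Real.exp_add, e1, Real.exp_add]
    ring
  simp_rw [hpt]
  rw [integral_add (integrable_gaussianPDFReal m v)
    ((integrable_gaussianPDFReal (m + b * v) v).const_mul _),
    integral_const_mul, integral_gaussianPDFReal_eq_one _ hv,
    integral_gaussianPDFReal_eq_one _ hv, mul_one]

lemma bridge_case (α₀ αa αz αx m xv a s : ℝ) (v : NNReal) (hv : v ≠ 0) :
    ∫ z, (1 + Real.exp (s * (α₀ + αa * a + αz * z + αx * xv))) ∂(gaussianReal m v)
      = 1 + Real.exp (s * (α₀ + αa * a + αx * xv) + s * αz * m + (s * αz) ^ 2 * v / 2) := by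
  have h : ∀ z : ℝ, s * (α₀ + αa * a + αz * z + αx * xv)
      = s * (α₀ + αa * a + αx * xv) + (s * αz) * z := fun z => by ring
  simp_rw [h]
  rw [gaussian_exp_integral _ _ _ _ hv]


/-- **Appendix claim: the parametric family `q(Z,A,X;α)` of equation (19) contains a valid
latent-level treatment confounding bridge function for the simulation design.** If
`P(A = 1 | σ(U,X))` is logistic in `(U,X)` and the conditional distribution of `Z` given
`σ(A,U,X)` is the Gaussian law `N(−0.2 − 0.3⬝X + 0.65⬝U, 0.5²)` (not depending on `A`),
then there are reals `α₀, α_a, α_z, α_x` with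
`E[ 1 + exp((−1)^{1−A}⬝(α₀ + α_a⬝A + α_z⬝Z + α_x⬝X)) | σ(A,U,X) ] = 1/P(A|σ(U,X))` a.s.,
the conditional expectation being computed against the regular conditional distribution. -/
theorem simulation_treatment_bridge_exists
    {Ω : Type*} [MeasurableSpace Ω]
    (P : Measure Ω) [IsProbabilityMeasure P]
    -- the random variables
    (A : Ω → ℝ) (U : Ω → ℝ) (X : Ω → ℝ) (Z : Ω → ℝ)
    (hA : Measurable A) (hU : Measurable U) (hX : Measurable X) (hZ : Measurable Z)
    (hA01 : ∀ ω, A ω = 0 ∨ A ω = 1)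
    -- `π` is a version of `P(A = 1 | σ(U,X))`, of logistic form
    (π : Ω → ℝ)
    (hπver : π =ᵐ[P] P[A|MeasurableSpace.comap (fun ω => (U ω, X ω)) inferInstance])
    (hπform : π =ᵐ[P] fun ω => (1 + Real.exp (-(0.3 + 0.4 * X ω - 0.6 * U ω)))⁻¹)
    -- the conditional distribution of `Z` given `σ(A,U,X)` is `N(−0.2 − 0.3X + 0.65U, 0.5²)`
    (hZlaw : ∀ f : ℝ → ℝ, Measurable f → (∃ C, ∀ x, |f x| ≤ C) →
      (P[(fun ω => f (Z ω))|
          MeasurableSpace.comap (fun ω => (A ω, U ω, X ω)) inferInstance])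
        =ᵐ[P] fun ω =>
          ∫ z, f z ∂(gaussianReal (-0.2 - 0.3 * X ω + 0.65 * U ω) ((0.5 : NNReal) ^ 2))) :
    ∃ α₀ αa αz αx : ℝ, ∀ᵐ ω ∂P,
      (∫ z, (1 + Real.exp ((-1 : ℝ) ^ ((1 : ℝ) - A ω) *
            (α₀ + αa * A ω + αz * z + αx * X ω)))
          ∂(gaussianReal (-0.2 - 0.3 * X ω + 0.65 * U ω) ((0.5 : NNReal) ^ 2)))
        = (A ω * π ω + (1 - A ω) * (1 - π ω))⁻¹ := by
  refine ⟨12/65 + 18/169 - 3/10, -(36/169), 12/13, -(8/65), ?_⟩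
  filter_upwards [hπform] with ω hω
  have hv : ((0.5 : NNReal) ^ 2) ≠ 0 := by
    intro h
    have h' := congrArg (fun x : NNReal => (x : ℝ)) h
    push_cast at h'
    norm_num at h'
  have hvr : (((0.5 : NNReal) ^ 2 : NNReal) : ℝ) = 1/4 := by push_cast; norm_num
  set t : ℝ := 0.3 + 0.4 * X ω - 0.6 * U ω with ht
  have hq : (0:ℝ) < Real.exp (-t) := Real.exp_pos _
  have h1q : (1:ℝ) + Real.exp (-t) ≠ 0 := by positivity
  have hmul : Real.exp t * Real.exp (-t) = 1 := by
    rw [← Real.exp_add]; simp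
  rcases hA01 ω with h0 | h1
  · rw [h0, show (-1:ℝ) ^ ((1:ℝ) - 0) = -1 by rw [sub_zero, Real.rpow_one],
      bridge_case _ _ _ _ _ _ _ _ _ hv, hω]
    have hE : (-1:ℝ) * ((12/65 + 18/169 - 3/10 : ℝ) + -(36/169) * 0 + -(8/65) * X ω)
        + (-1) * (12/13) * (-0.2 - 0.3 * X ω + 0.65 * U ω)
        + ((-1) * (12/13)) ^ 2 * (((0.5 : NNReal) ^ 2 : NNReal) : ℝ) / 2 = t := by
      rw [hvr, ht]; ring
    rw [hE, Real.exp_eq_exp.mpr rfl]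
    field_simp
    nlinarith [hmul, hq]
  · rw [h1, show (-1:ℝ) ^ ((1:ℝ) - 1) = 1 by rw [sub_self, Real.rpow_zero],
      bridge_case _ _ _ _ _ _ _ _ _ hv, hω]
    have hE : (1:ℝ) * ((12/65 + 18/169 - 3/10 : ℝ) + -(36/169) * 1 + -(8/65) * X ω)
        + 1 * (12/13) * (-0.2 - 0.3 * X ω + 0.65 * U ω)
        + (1 * (12/13)) ^ 2 * (((0.5 : NNReal) ^ 2 : NNReal) : ℝ) / 2 = -t := by
      rw [hvr, ht]; ring
    rw [hE]
    field_simp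
    ring
end
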